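/- Let L be a finite lattice with minimum element 0 and maximum element 1, and let μ denote its Möbius function. If there exists an element x ∈ L that has no complement in L, then μ(0,1) = 0. -/

import Mathlib

open Finset

/-- The Möbius function of a finite partial order, as an integer-valued
function on pairs of elements. -/
noncomputable def latticeMu (L : Type*) [PartialOrder L] [Fintype L] (a b : L) : ℤ :=
  letI : DecidableEq L := Classical.decEq _
  letI : @DecidableRel L L (· < ·) := Classical.decRel _
  letI : @DecidableRel L L (· ≤ ·) := Classical.decRel _
  letI := Fintype.toLocallyFiniteOrder (α := L)
  IncidenceAlgebra.mu ℤ a b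

/-- The zeta function of a partial order: the characteristic function of `≤`. -/
noncomputable def latticeZeta (L : Type*) [PartialOrder L] (a b : L) : ℤ :=
  letI : @DecidableRel L L (· ≤ ·) := Classical.decRel _
  IncidenceAlgebra.zeta ℤ a b

section Aux

variable {L : Type*} [Lattice L] [BoundedOrder L] [Fintype L] [DecidableEq L]
  [LocallyFiniteOrder L] [@DecidableRel L L (· ≤ ·)]

/-- Weisner's theorem: for `⊥ < c`, the sum of `μ(⊥, z)` over all `z` with
`z ⊔ c = w` is zero. -/
lemma weisner_aux (c : L) (hc : (⊥ : L) < c) :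
    ∀ w : L, c ≤ w →
      ∑ z ∈ univ.filter (fun z => z ⊔ c = w), IncidenceAlgebra.mu ℤ (⊥ : L) z = 0 := by
  intro w
  induction w using WellFoundedLT.induction with
  | _ w IH =>
    intro hcw
    have key : ∑ v ∈ Icc c w, ∑ z ∈ univ.filter (fun z => z ⊔ c = v),
        IncidenceAlgebra.mu ℤ (⊥ : L) z = 0 := by
      have hmaps : ∀ z ∈ univ.filter (fun z : L => z ⊔ c ≤ w), z ⊔ c ∈ Icc c w := by
        intro z hz
        simp only [mem_filter, mem_univ, true_and] at hz
        exact mem_Icc.2 ⟨le_sup_right, hz⟩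
      have h1 := Finset.sum_fiberwise_of_maps_to hmaps
        (fun z => IncidenceAlgebra.mu ℤ (⊥ : L) z)
      have h2 : ∀ v ∈ Icc c w,
          (univ.filter (fun z : L => z ⊔ c ≤ w)).filter (fun z => z ⊔ c = v)
            = univ.filter (fun z => z ⊔ c = v) := by
        intro v hv
        rw [mem_Icc] at hv
        ext z
        simp only [mem_filter, mem_univ, true_and, and_iff_right_iff_imp]
        intro h; rw [h]; exact hv.2
      calc ∑ v ∈ Icc c w, ∑ z ∈ univ.filter (fun z => z ⊔ c = v),
            IncidenceAlgebra.mu ℤ (⊥ : L) z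
          = ∑ v ∈ Icc c w, ∑ z ∈ (univ.filter (fun z : L => z ⊔ c ≤ w)).filter
              (fun z => z ⊔ c = v), IncidenceAlgebra.mu ℤ (⊥ : L) z := by
            exact Finset.sum_congr rfl fun v hv => by rw [h2 v hv]
        _ = ∑ z ∈ univ.filter (fun z : L => z ⊔ c ≤ w), IncidenceAlgebra.mu ℤ (⊥ : L) z := h1
        _ = ∑ z ∈ Icc (⊥ : L) w, IncidenceAlgebra.mu ℤ (⊥ : L) z := by
            apply Finset.sum_congr _ fun _ _ => rfl
            ext z
            simp only [mem_filter, mem_univ, true_and, mem_Icc, bot_le, true_and, sup_le_iff]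
            exact ⟨fun h => h.1, fun h => ⟨h, hcw⟩⟩
        _ = 0 := by
            rw [IncidenceAlgebra.sum_Icc_mu_right]
            have : (⊥ : L) ≠ w := (hc.trans_le hcw).ne
            simp [this]
    rw [← Ico_insert_right hcw, Finset.sum_insert right_notMem_Ico] at key
    have hzero : ∑ v ∈ Ico c w, ∑ z ∈ univ.filter (fun z => z ⊔ c = v),
        IncidenceAlgebra.mu ℤ (⊥ : L) z = 0 := by
      apply Finset.sum_eq_zero
      intro v hv
      rw [mem_Ico] at hv
      exact IH v hv.2 hv.1
    rw [hzero, add_zero] at key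
    exact key

/-- Main induction: if `x ⊓ y` has no complement in the interval `[⊥, y]`,
then `μ(⊥, y) = 0`. -/
lemma mu_bot_eq_zero_aux (x : L) :
    ∀ y : L, (∀ z ≤ y, ¬((x ⊓ y) ⊓ z = ⊥ ∧ (x ⊓ y) ⊔ z = y)) →
      IncidenceAlgebra.mu ℤ (⊥ : L) y = 0 := by
  intro y
  induction y using WellFoundedLT.induction with
  | _ y IH =>
    intro H
    have hxy : (⊥ : L) < x ⊓ y := by
      rcases eq_bot_or_bot_lt (x ⊓ y) with h | h
      · exact absurd ⟨by rw [h, bot_inf_eq], sup_eq_right.2 inf_le_right⟩ (H y le_rfl)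
      · exact h
    have hW := weisner_aux (x ⊓ y) hxy y inf_le_right
    have hyS : y ∈ univ.filter (fun z : L => z ⊔ (x ⊓ y) = y) := by
      simp only [mem_filter, mem_univ, true_and]
      exact sup_eq_left.2 inf_le_right
    rw [← Finset.add_sum_erase _ _ hyS] at hW
    have hrest : ∑ z ∈ (univ.filter (fun z : L => z ⊔ (x ⊓ y) = y)).erase y,
        IncidenceAlgebra.mu ℤ (⊥ : L) z = 0 := by
      apply Finset.sum_eq_zero
      intro z hz
      rw [Finset.mem_erase, mem_filter] at hz
      obtain ⟨hzy, -, hzsup⟩ := hz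
      have hzley : z ≤ y := le_sup_left.trans hzsup.le
      have hzlt : z < y := lt_of_le_of_ne hzley hzy
      apply IH z hzlt
      intro w hwz ⟨h1, h2⟩
      apply H w (hwz.trans hzley)
      constructor
      · -- (x ⊓ y) ⊓ w = ⊥
        have : (x ⊓ y) ⊓ w = (x ⊓ z) ⊓ w := by
          rw [inf_assoc, inf_assoc]
          congr 1
          rw [inf_eq_right.2 (hwz.trans hzley), inf_eq_right.2 hwz]
        rw [this, h1]
      · -- (x ⊓ y) ⊔ w = y
        apply le_antisymm (sup_le inf_le_right (hwz.trans hzley))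
        have hz' : z ≤ (x ⊓ y) ⊔ w := by
          calc z = (x ⊓ z) ⊔ w := h2.symm
            _ ≤ (x ⊓ y) ⊔ w := sup_le_sup_right (inf_le_inf_left x hzley) w
        calc y = z ⊔ (x ⊓ y) := hzsup.symm
          _ ≤ ((x ⊓ y) ⊔ w) ⊔ (x ⊓ y) := sup_le_sup_right hz' _
          _ = (x ⊓ y) ⊔ w := sup_eq_left.2 le_sup_left
    rw [hrest, add_zero] at hW
    exact hW

end Aux

/-- If some element of a finite bounded lattice has no complement, then the
Möbius number of the lattice is zero. -/
theorem mu_eq_zero_of_no_complement {L : Type*} [Lattice L] [BoundedOrder L] [Fintype L]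
    (x : L) (hx : ∀ y : L, ¬ (x ⊓ y = ⊥ ∧ x ⊔ y = ⊤)) :
    latticeMu L ⊥ ⊤ = 0 := by
  unfold latticeMu
  letI : DecidableEq L := Classical.decEq _
  letI : @DecidableRel L L (· < ·) := Classical.decRel _
  letI : @DecidableRel L L (· ≤ ·) := Classical.decRel _
  letI := Fintype.toLocallyFiniteOrder (α := L)
  apply mu_bot_eq_zero_aux x ⊤
  intro z _ ⟨h1, h2⟩
  exact hx z ⟨by simpa using h1, by simpa using h2⟩
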